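/- Let (R, i, χ) be an A-ring with a right grouplike character, and assume that A is quasi-projective as a right R-module (via a ↼ r = χ(i(a) r)). If R is right FBN and A is right noetherian, then B = A^R is right FBN. -/

import Mathlib

open MulOpposite

/-- A ring `S` is right bounded if every essential right ideal of `S` contains a
nonzero two-sided ideal. Right ideals of `S` are `Sᵐᵒᵖ`-submodules of `S`. -/
def RightBounded (S : Type*) [Ring S] : Prop :=
  ∀ E : Submodule Sᵐᵒᵖ S,
    (∀ J : Submodule Sᵐᵒᵖ S, J ≠ ⊥ → E ⊓ J ≠ ⊥) →
    ∃ T : TwoSidedIdeal S, T ≠ ⊥ ∧ ∀ x ∈ T, x ∈ E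

/-- A two-sided ideal `P` of a ring `S` is prime if `P ≠ S` and
`a S b ⊆ P` implies `a ∈ P` or `b ∈ P`. -/
def TwoSidedIdeal.IsPrimeTSI {S : Type*} [Ring S] (P : TwoSidedIdeal S) : Prop :=
  P ≠ ⊤ ∧ ∀ a b : S, (∀ r : S, a * r * b ∈ P) → a ∈ P ∨ b ∈ P

/-- A ring `S` is right FBN (fully bounded noetherian) if `S` is right noetherian and
`S/P` is right bounded for every two-sided prime ideal `P` of `S`. -/
def RightFBN (S : Type*) [Ring S] : Prop :=
  IsNoetherianRing Sᵐᵒᵖ ∧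
  ∀ P : TwoSidedIdeal S, P.IsPrimeTSI → RightBounded P.ringCon.Quotient

set_option linter.unusedSectionVars false

namespace FBNAux


section Generic
variable {S : Type*} [Ring S]

/-- The right annihilator of an element, as a right ideal. -/
def rAnn (x : S) : Submodule Sᵐᵒᵖ S where
  carrier := {t | x * t = 0}
  add_mem' := by
    intro a b (ha : _ = _) (hb : _ = _)
    show x * (a + b) = 0
    rw [mul_add, ha, hb, add_zero]
  zero_mem' := by show x * 0 = 0; rw [mul_zero]
  smul_mem' := by
    intro c t (ht : _ = _)
    show x * (c • t) = 0
    have : c • t = t * c.unop := rfl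
    rw [this, ← mul_assoc, ht, zero_mul]

lemma mem_rAnn {x t : S} : t ∈ rAnn x ↔ x * t = 0 := Iff.rfl

/-- The colon ideal `(E : x)`. -/
def colonI (E : Submodule Sᵐᵒᵖ S) (x : S) : Submodule Sᵐᵒᵖ S where
  carrier := {t | x * t ∈ E}
  add_mem' := by
    intro a b ha hb
    show x * (a + b) ∈ E
    rw [mul_add]; exact E.add_mem ha hb
  zero_mem' := by show x * 0 ∈ E; rw [mul_zero]; exact E.zero_mem
  smul_mem' := by
    intro c t ht
    show x * (c • t) ∈ E
    have h1 : c • t = t * c.unop := rfl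
    rw [h1, ← mul_assoc]
    have : x * t * c.unop = c • (x * t) := rfl
    rw [this]
    exact E.smul_mem c ht

lemma mem_colonI {E : Submodule Sᵐᵒᵖ S} {x t : S} : t ∈ colonI E x ↔ x * t ∈ E := Iff.rfl

/-- Essentiality of a right ideal. -/
def Ess (E : Submodule Sᵐᵒᵖ S) : Prop :=
  ∀ J : Submodule Sᵐᵒᵖ S, J ≠ ⊥ → E ⊓ J ≠ ⊥

lemma ess_mono {E E' : Submodule Sᵐᵒᵖ S} (h : E ≤ E') (hE : Ess E) : Ess E' := by
  intro J hJ
  have := hE J hJ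
  intro hbot
  exact this (by
    rw [eq_bot_iff] at hbot ⊢
    exact le_trans (inf_le_inf_right J h) hbot)

lemma ess_colonI {E : Submodule Sᵐᵒᵖ S} (hE : Ess E) (x : S) : Ess (colonI E x) := by
  intro J hJ
  obtain ⟨j, hjJ, hj0⟩ := Submodule.ne_bot_iff J |>.1 hJ
  -- the image x * J as a right ideal
  let XJ : Submodule Sᵐᵒᵖ S :=
    { carrier := {y | ∃ t ∈ J, x * t = y}
      add_mem' := by
        rintro a b ⟨s, hs, rfl⟩ ⟨t, ht, rfl⟩
        exact ⟨s + t, J.add_mem hs ht, by rw [mul_add]⟩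
      zero_mem' := ⟨0, J.zero_mem, by rw [mul_zero]⟩
      smul_mem' := by
        rintro c y ⟨t, ht, rfl⟩
        refine ⟨c • t, J.smul_mem c ht, ?_⟩
        show x * (c • t) = c • (x * t)
        show x * (t * c.unop) = (x * t) * c.unop
        rw [mul_assoc] }
  by_cases hXJ : XJ = ⊥
  · -- then J ≤ colonI E x
    intro hbot
    apply hj0
    have hjc : j ∈ colonI E x := by
      rw [mem_colonI]
      have : x * j ∈ XJ := ⟨j, hjJ, rfl⟩
      rw [hXJ, Submodule.mem_bot] at this
      rw [this]; exact E.zero_mem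
    have : j ∈ (⊥ : Submodule Sᵐᵒᵖ S) := hbot ▸ (Submodule.mem_inf.2 ⟨hjc, hjJ⟩)
    exact Submodule.mem_bot _ |>.1 this
  · have := hE XJ hXJ
    rw [Submodule.ne_bot_iff] at this
    obtain ⟨y, hy, hy0⟩ := this
    obtain ⟨hyE, t, htJ, rfl⟩ := Submodule.mem_inf.1 hy
    intro hbot
    have ht0 : t ≠ 0 := by rintro rfl; rw [mul_zero] at hy0; exact hy0 rfl
    apply ht0
    have : t ∈ (⊥ : Submodule Sᵐᵒᵖ S) := by
      rw [← hbot]; exact Submodule.mem_inf.2 ⟨hyE, htJ⟩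
    exact Submodule.mem_bot _ |>.1 this

/-- Goldie's lemma: in a prime ring with a maximality property on right annihilators,
singular elements are zero. -/
lemma singular_eq_zero
    (hmax : ∀ 𝒜 : Set (Submodule Sᵐᵒᵖ S), 𝒜.Nonempty → ∃ M ∈ 𝒜, ∀ N ∈ 𝒜, ¬ M < N)
    (hprime : ∀ a b : S, (∀ r, a * r * b = 0) → a = 0 ∨ b = 0)
    (x : S) (hx : Ess (rAnn x)) : x = 0 := by
  by_contra hx0
  set Zs : Set S := {z | z ≠ 0 ∧ Ess (rAnn z)} with hZs
  have hxZ : x ∈ Zs := ⟨hx0, hx⟩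
  obtain ⟨M, ⟨z, hzZ, rfl⟩, hMmax⟩ := hmax (rAnn '' Zs) ⟨rAnn x, x, hxZ, rfl⟩
  have hstep : ∀ s, z * s * z = 0 := by
    intro s
    by_contra hzsz
    set y := s * z with hy
    have hy0 : y ≠ 0 := by
      rintro h
      apply hzsz
      rw [mul_assoc, ← hy, h, mul_zero]
    have hyann : rAnn z ≤ rAnn y := by
      intro t (ht : z * t = 0)
      show y * t = 0
      rw [hy, mul_assoc, ht, mul_zero]
    have hyEss : Ess (rAnn y) := ess_mono hyann hzZ.2
    have hyZ : y ∈ Zs := ⟨hy0, hyEss⟩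
    have heq : rAnn z = rAnn y := by
      by_contra hne
      exact hMmax (rAnn y) ⟨y, hyZ, rfl⟩ (lt_of_le_of_ne hyann hne)
    have hzy0 : z * y ≠ 0 := by rw [hy, ← mul_assoc]; exact hzsz
    have hzyann : rAnn y ≤ rAnn (z * y) := by
      intro t (ht : y * t = 0)
      show z * y * t = 0
      rw [mul_assoc, ht, mul_zero]
    have hzyZ : z * y ∈ Zs := ⟨hzy0, ess_mono hzyann hyEss⟩
    -- rAnn z is essential; intersect with the right ideal generated by y
    let Y : Submodule Sᵐᵒᵖ S :=
      { carrier := {w | ∃ t, y * t = w}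
        add_mem' := by rintro a b ⟨s1, rfl⟩ ⟨t1, rfl⟩; exact ⟨s1 + t1, by rw [mul_add]⟩
        zero_mem' := ⟨0, by rw [mul_zero]⟩
        smul_mem' := by
          rintro c w ⟨t, rfl⟩
          refine ⟨t * c.unop, ?_⟩
          show y * (t * c.unop) = c • (y * t)
          have h1 : c • (y * t) = y * t * c.unop := rfl
          rw [h1]; simp [hy, mul_assoc] }
    have hYne : Y ≠ ⊥ := by
      rw [Submodule.ne_bot_iff]
      exact ⟨y, ⟨1, by rw [mul_one]⟩, hy0⟩
    have := hzZ.2 Y hYne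
    rw [Submodule.ne_bot_iff] at this
    obtain ⟨u, hu, hu0⟩ := this
    obtain ⟨(huann : z * u = 0), t, rfl⟩ := Submodule.mem_inf.1 hu
    have htzy : t ∈ rAnn (z * y) := by
      show z * y * t = 0
      rw [mul_assoc]; exact huann
    have htny : t ∉ rAnn y := fun h => hu0 h
    have : rAnn z < rAnn (z * y) := by
      rw [heq]
      exact lt_of_le_of_ne hzyann (fun h => htny (h ▸ htzy))
    exact hMmax (rAnn (z * y)) ⟨z * y, hzyZ, rfl⟩ this
  rcases hprime z z hstep with h | h <;> exact hzZ.1 h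

end Generic


section NoethTransfer
variable {S : Type*} [Ring S]

/-- Transfer right ideals of `S` to left ideals of `Sᵐᵒᵖ`. -/
def toOpSub (K : Submodule Sᵐᵒᵖ S) : Submodule Sᵐᵒᵖ Sᵐᵒᵖ where
  carrier := {x | x.unop ∈ K}
  add_mem' := by intro a b ha hb; show (a + b).unop ∈ K; rw [unop_add]; exact K.add_mem ha hb
  zero_mem' := by show (0 : Sᵐᵒᵖ).unop ∈ K; rw [unop_zero]; exact K.zero_mem
  smul_mem' := by
    intro c x hx
    show (c • x).unop ∈ K
    have h1 : c • x = c * x := rfl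
    have h2 : (c * x).unop = x.unop * c.unop := rfl
    rw [h1, h2]
    have h3 : x.unop * c.unop = (op c.unop) • x.unop := rfl
    rw [h3]
    exact K.smul_mem _ hx

lemma toOpSub_le_iff {K K' : Submodule Sᵐᵒᵖ S} : toOpSub K ≤ toOpSub K' ↔ K ≤ K' := by
  constructor
  · intro h a ha
    have : (op a) ∈ toOpSub K := by show (op a).unop ∈ K; rwa [unop_op]
    have := h this
    show a ∈ K'
    have h2 : (op a).unop ∈ K' := this
    rwa [unop_op] at h2
  · intro h x hx
    exact h hx

lemma isNoetherian_right_of_op (h : IsNoetherianRing Sᵐᵒᵖ) : IsNoetherian Sᵐᵒᵖ S := by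
  have : WellFoundedGT (Submodule Sᵐᵒᵖ Sᵐᵒᵖ) := (isNoetherian_iff'.1 h)
  have emb : Submodule Sᵐᵒᵖ S ↪o Submodule Sᵐᵒᵖ Sᵐᵒᵖ :=
    OrderEmbedding.ofMapLEIff toOpSub (fun _ _ => toOpSub_le_iff)
  exact isNoetherian_mk (emb.strictMono.wellFoundedGT)

lemma noeth_max_choice (h : IsNoetherianRing Sᵐᵒᵖ) :
    ∀ 𝒜 : Set (Submodule Sᵐᵒᵖ S), 𝒜.Nonempty → ∃ M ∈ 𝒜, ∀ N ∈ 𝒜, ¬ M < N := by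
  have := isNoetherian_right_of_op h
  exact fun 𝒜 h𝒜 => set_has_maximal_iff_noetherian.2 this 𝒜 h𝒜

end NoethTransfer

section TSI
variable {S : Type*} [Ring S] (I : TwoSidedIdeal S)

lemma tsi_mk_eq_zero_iff (b : S) : I.ringCon.mk' b = 0 ↔ b ∈ I := by
  show (b : I.ringCon.Quotient) = 0 ↔ _
  have h0 : (0 : I.ringCon.Quotient) = ((0 : S) : I.ringCon.Quotient) := rfl
  rw [h0, RingCon.eq, I.rel_iff, sub_zero]

lemma tsi_mk_eq_iff (x y : S) : I.ringCon.mk' x = I.ringCon.mk' y ↔ x - y ∈ I := by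
  show (x : I.ringCon.Quotient) = (y : I.ringCon.Quotient) ↔ _
  rw [RingCon.eq, I.rel_iff]

lemma tsi_mk_surjective : Function.Surjective (I.ringCon.mk') := by
  intro x
  obtain ⟨b, hb⟩ := Quotient.exists_rep x
  exact ⟨b, hb⟩

lemma tsi_ne_top_of_one (h : (1 : S) ∉ I) : I ≠ ⊤ := by
  intro heq
  exact h (heq ▸ TwoSidedIdeal.mem_top S)

lemma tsi_one_of_eq_top (h : I = ⊤) : (1 : S) ∈ I := h ▸ TwoSidedIdeal.mem_top S

lemma tsi_eq_top_of_one (h : (1 : S) ∈ I) : I = ⊤ := by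
  apply TwoSidedIdeal.ext
  intro x
  simp only [TwoSidedIdeal.mem_top S, iff_true]
  have := I.mul_mem_left x 1 h
  rwa [mul_one] at this

/-- primeness of the quotient ring, elementwise. -/
lemma tsi_quotient_prime (hP : I.IsPrimeTSI) :
    ∀ a b : I.ringCon.Quotient, (∀ r, a * r * b = 0) → a = 0 ∨ b = 0 := by
  intro a b h
  obtain ⟨a0, rfl⟩ := tsi_mk_surjective I a
  obtain ⟨b0, rfl⟩ := tsi_mk_surjective I b
  have : ∀ r : S, a0 * r * b0 ∈ I := by
    intro r
    have := h (I.ringCon.mk' r)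
    rw [← map_mul, ← map_mul] at this
    exact (tsi_mk_eq_zero_iff I _).1 this
  rcases hP.2 a0 b0 this with h1 | h1
  · left; exact (tsi_mk_eq_zero_iff I _).2 h1
  · right; exact (tsi_mk_eq_zero_iff I _).2 h1

lemma tsi_quotient_noeth (hnoeth : IsNoetherianRing Sᵐᵒᵖ) :
    IsNoetherianRing (I.ringCon.Quotient)ᵐᵒᵖ := by
  have hsurj : Function.Surjective (RingHom.op I.ringCon.mk') := by
    intro x
    obtain ⟨b, hb⟩ := tsi_mk_surjective I x.unop
    exact ⟨op b, by rw [← op_unop x, ← hb]; rfl⟩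
  exact isNoetherianRing_of_surjective Sᵐᵒᵖ _ (RingHom.op I.ringCon.mk') hsurj

end TSI

section Main

universe u
variable {A R : Type u} [Ring A] [Ring R] (i : A →+* R) (χ : R →+ A)
variable [Module Rᵐᵒᵖ A] (B : Subring A)

section Identities
variable (hχA : ∀ (r : R) (a : A), χ (r * i a) = χ r * a)
variable (hχmul : ∀ r s : R, χ (i (χ r) * s) = χ (r * s))
variable (hχone : χ (1 : R) = 1)
variable (hsmul : ∀ (r : R) (a : A), op r • a = χ (i a * r))
variable (hB : ∀ b : A, b ∈ B ↔ ∀ r : R, χ (i b * r) = b * χ r)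

include hχA hχone in
lemma chi_i (a : A) : χ (i a) = a := by
  have := hχA 1 a
  rwa [one_mul, hχone, one_mul] at this

include hsmul hχA hχone in
lemma mul_eq_smul (a c : A) : a * c = op (i c) • a := by
  rw [hsmul, hχA, chi_i i χ hχA hχone]

lemma smul_smul_op (r s : R) (a : A) : op s • (op r • a) = op (r * s) • a := by
  rw [← mul_smul, ← MulOpposite.op_mul]

include hsmul hχone in
lemma smul_one_eq (r : R) : op r • (1 : A) = χ r := by
  rw [hsmul, map_one, one_mul]

include hχmul hsmul in
lemma chi_shift (r s : R) : op s • χ r = χ (r * s) := by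
  rw [hsmul, hχmul]

include hB hsmul in
lemma B_mul_chi {b : A} (hb : b ∈ B) (r : R) : b * χ r = χ (i b * r) := ((hB b).1 hb r).symm

include hB hsmul in
lemma B_comm {b : A} (hb : b ∈ B) (r : R) (a : A) : op r • (b * a) = b * (op r • a) := by
  rw [hsmul r (b * a), hsmul r a, i.map_mul, mul_assoc]
  exact (hB b).1 hb (i a * r)

include hsmul hχA hχone in
lemma K_mul {K : Submodule Rᵐᵒᵖ A} {a : A} (ha : a ∈ K) (c : A) : a * c ∈ K := by
  rw [mul_eq_smul i χ hχA hχone hsmul]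
  exact K.smul_mem _ ha

include hsmul hχA hχone in
lemma smul_mul (r : R) (a c : A) : (op r • a) * c = op (r * i c) • a := by
  rw [mul_eq_smul i χ hχA hχone hsmul, smul_smul_op]

include hsmul hχA hχone hB in
lemma end_eq (g : A →ₗ[Rᵐᵒᵖ] A) (a : A) : g a = g 1 * a := by
  have h1 : a = op (i a) • (1 : A) := by
    rw [hsmul, map_one, one_mul, chi_i i χ hχA hχone]
  conv_lhs => rw [h1]
  rw [map_smul, ← mul_eq_smul i χ hχA hχone hsmul]

include hsmul hχA hχone hχmul in
lemma end_mem_B (hB : ∀ b : A, b ∈ B ↔ ∀ r : R, χ (i b * r) = b * χ r)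
    (g : A →ₗ[Rᵐᵒᵖ] A) : g 1 ∈ B := by
  rw [hB]
  intro r
  have h1 : χ (i (g 1) * r) = op r • (g 1) := (hsmul r (g 1)).symm
  rw [h1, ← map_smul, smul_one_eq i χ hχone hsmul]
  rw [end_eq i χ B hχA hχone hsmul hB g (χ r)]

end Identities

section TL

variable (hχA : ∀ (r : R) (a : A), χ (r * i a) = χ r * a)
variable (hχmul : ∀ r s : R, χ (i (χ r) * s) = χ (r * s))
variable (hχone : χ (1 : R) = 1)
variable (hsmul : ∀ (r : R) (a : A), op r • a = χ (i a * r))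
variable (hB : ∀ b : A, b ∈ B ↔ ∀ r : R, χ (i b * r) = b * χ r)

/-- `f·A` as a right `R`-submodule of `A`, for `f ∈ B`. -/
def leftMulIdeal (f : B) : Submodule Rᵐᵒᵖ A where
  carrier := {x | ∃ a : A, (f : A) * a = x}
  add_mem' := by
    rintro x y ⟨a, rfl⟩ ⟨a', rfl⟩
    exact ⟨a + a', by rw [mul_add]⟩
  zero_mem' := ⟨0, by rw [mul_zero]⟩
  smul_mem' := by
    rintro c x ⟨a, rfl⟩
    refine ⟨c • a, ?_⟩
    have hc : c = op c.unop := (MulOpposite.op_unop c).symm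
    rw [hc]
    exact (B_comm i χ B hsmul hB f.2 c.unop a).symm

lemma mem_leftMulIdeal {f : B} {x : A} :
    x ∈ leftMulIdeal i χ B hsmul hB f ↔ ∃ a : A, (f : A) * a = x := Iff.rfl

/-- Finite sums of `fₖ·A`. -/
def SubmodL : List B → Submodule Rᵐᵒᵖ A
  | [] => ⊥
  | f :: t => leftMulIdeal i χ B hsmul hB f ⊔ SubmodL t

variable (hqp : ∀ (K : Submodule Rᵐᵒᵖ A) (f : A →ₗ[Rᵐᵒᵖ] A ⧸ K),
      ∃ g : A →ₗ[Rᵐᵒᵖ] A, ∀ a : A, K.mkQ (g a) = f a)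

/-- For `b ∈ B`, left multiplication by `b` is right `R`-linear. -/
def leftMulMap (b : B) : A →ₗ[Rᵐᵒᵖ] A where
  toFun a := (b : A) * a
  map_add' := mul_add _
  map_smul' := by
    intro c a
    simp only [RingHom.id_apply]
    have hc : c = op c.unop := (MulOpposite.op_unop c).symm
    rw [hc]
    exact (B_comm i χ B hsmul hB b.2 c.unop a).symm

include hχA hχmul hχone hsmul hB hqp in
lemma TL_single (f b : B) (K : Submodule Rᵐᵒᵖ A)
    (hmem : (b : A) ∈ leftMulIdeal i χ B hsmul hB f ⊔ K) :
    ∃ c : B, (b : A) - (f : A) * (c : A) ∈ K := by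
  classical
  set Lf := leftMulMap i χ B hsmul hB f with hLf
  set Lb := leftMulMap i χ B hsmul hB b with hLb
  set φ : A →ₗ[Rᵐᵒᵖ] A ⧸ K := K.mkQ.comp Lf with hφ
  set ψ : A →ₗ[Rᵐᵒᵖ] A ⧸ K := K.mkQ.comp Lb with hψ
  obtain ⟨y, hy, k, hk, hbk⟩ := Submodule.mem_sup.1 hmem
  obtain ⟨x, rfl⟩ := hy
  have hrange : ∀ a, ψ a ∈ LinearMap.range φ := by
    intro a
    refine ⟨x * a, ?_⟩
    have h1 : φ (x * a) = K.mkQ ((f : A) * (x * a)) := rfl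
    have h2 : ψ a = K.mkQ ((b : A) * a) := rfl
    rw [h1, h2]
    have h3 : (b : A) * a = (f : A) * (x * a) + k * a := by
      rw [← hbk, add_mul, mul_assoc]
    rw [h3, map_add]
    have h4 : K.mkQ (k * a) = 0 :=
      (Submodule.Quotient.mk_eq_zero K).2 (K_mul i χ hχA hχone hsmul hk a)
    rw [h4, add_zero]
  set ψ' : A →ₗ[Rᵐᵒᵖ] A ⧸ LinearMap.ker φ :=
    (φ.quotKerEquivRange.symm.toLinearMap).comp (ψ.codRestrict (LinearMap.range φ) hrange)
    with hψ'
  obtain ⟨g, hg⟩ := hqp (LinearMap.ker φ) ψ'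
  have key : φ (g 1) = ψ 1 := by
    have h5 := hg 1
    have h6 : (LinearMap.ker φ).mkQ (g 1) = Submodule.Quotient.mk (g 1) := rfl
    rw [h6] at h5
    have h7 := congrArg (φ.quotKerEquivRange) h5
    have h8 : ((φ.quotKerEquivRange (Submodule.Quotient.mk (g 1))) : A ⧸ K) = φ (g 1) :=
      LinearMap.quotKerEquivRange_apply_mk φ (g 1)
    have h9 : φ.quotKerEquivRange (ψ' 1) = (ψ.codRestrict (LinearMap.range φ) hrange) 1 := by
      rw [hψ']
      simp only [LinearMap.coe_comp, Function.comp_apply, LinearEquiv.coe_coe]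
      exact φ.quotKerEquivRange.apply_symm_apply _
    rw [h9] at h7
    have h10 : (((ψ.codRestrict (LinearMap.range φ) hrange) 1 : LinearMap.range φ) : A ⧸ K)
        = ψ 1 := rfl
    calc φ (g 1) = _ := h8.symm
    _ = _ := congrArg Subtype.val h7
    _ = ψ 1 := h10
  refine ⟨⟨g 1, end_mem_B i χ B hχA hχmul hχone hsmul hB g⟩, ?_⟩
  have h11 : K.mkQ ((f : A) * g 1) = K.mkQ ((b : A) * 1) := key
  rw [mul_one] at h11
  have h12 : (f : A) * g 1 - (b : A) ∈ K := by
    rw [← Submodule.Quotient.eq K]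
    exact h11
  have h13 : (b : A) - (f : A) * g 1 = -((f : A) * g 1 - (b : A)) := (neg_sub _ _).symm
  rw [h13]
  exact K.neg_mem h12

include hχA hχmul hχone hsmul hB hqp in
lemma TL_list (S : Set A) (hS0 : (0 : A) ∈ S) (hSB : ∀ s ∈ S, s ∈ B)
    (hSadd : ∀ x ∈ S, ∀ y ∈ S, x + y ∈ S)
    (hSmul : ∀ x ∈ S, ∀ c : B, x * (c : A) ∈ S) :
    ∀ (l : List B), (∀ f ∈ l, (f : A) ∈ S) →
    ∀ (K : Submodule Rᵐᵒᵖ A) (b : B),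
      (b : A) ∈ SubmodL i χ B hsmul hB l ⊔ K →
      ∃ s ∈ S, (b : A) - s ∈ K := by
  intro l
  induction l with
  | nil =>
    intro _ K b hb
    refine ⟨0, hS0, ?_⟩
    rw [sub_zero]
    have : SubmodL i χ B hsmul hB [] ⊔ K = K := by
      show (⊥ : Submodule Rᵐᵒᵖ A) ⊔ K = K
      rw [bot_sup_eq]
    rwa [this] at hb
  | cons f t ih =>
    intro hl K b hb
    have hb' : (b : A) ∈ leftMulIdeal i χ B hsmul hB f ⊔ (SubmodL i χ B hsmul hB t ⊔ K) := by
      have : SubmodL i χ B hsmul hB (f :: t) ⊔ K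
          = leftMulIdeal i χ B hsmul hB f ⊔ (SubmodL i χ B hsmul hB t ⊔ K) := by
        show (leftMulIdeal i χ B hsmul hB f ⊔ SubmodL i χ B hsmul hB t) ⊔ K = _
        rw [sup_assoc]
      rwa [this] at hb
    obtain ⟨c, hc⟩ := TL_single i χ B hχA hχmul hχone hsmul hB hqp f b
      (SubmodL i χ B hsmul hB t ⊔ K) hb'
    set b' : B := b - f * c with hb'def
    have hb'mem : (b' : A) ∈ SubmodL i χ B hsmul hB t ⊔ K := hc
    obtain ⟨s', hs'S, hs'⟩ := ih (fun g hg => hl g (List.mem_cons_of_mem f hg)) K b' hb'mem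
    refine ⟨(f : A) * (c : A) + s', ?_, ?_⟩
    · exact hSadd _ (hSmul _ (hl f List.mem_cons_self) c) _ hs'S
    · have : (b : A) - ((f : A) * c + s') = (b' : A) - s' := by
        rw [hb'def]
        push_cast
        rw [sub_add_eq_sub_sub]
      rw [this]
      exact hs'
end TL

section Span

variable (hχA : ∀ (r : R) (a : A), χ (r * i a) = χ r * a)
variable (hχmul : ∀ r s : R, χ (i (χ r) * s) = χ (r * s))
variable (hχone : χ (1 : R) = 1)
variable (hsmul : ∀ (r : R) (a : A), op r • a = χ (i a * r))
variable (hB : ∀ b : A, b ∈ B ↔ ∀ r : R, χ (i b * r) = b * χ r)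
variable (hqp : ∀ (K : Submodule Rᵐᵒᵖ A) (f : A →ₗ[Rᵐᵒᵖ] A ⧸ K),
      ∃ g : A →ₗ[Rᵐᵒᵖ] A, ∀ a : A, K.mkQ (g a) = f a)

include hsmul hB in
lemma list_smul_sum (c : Rᵐᵒᵖ) (l : List (B × A)) :
    c • (l.map fun p => (p.1 : A) * p.2).sum = (l.map fun p => (p.1 : A) * (c • p.2)).sum := by
  induction l with
  | nil => simp
  | cons p t ih =>
    simp only [List.map_cons, List.sum_cons, smul_add, ih]
    congr 1
    have hc : c = op c.unop := (MulOpposite.op_unop c).symm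
    rw [hc]
    exact B_comm i χ B hsmul hB p.1.2 c.unop p.2

lemma list_neg_sum (l : List (B × A)) :
    -(l.map fun p => (p.1 : A) * p.2).sum = (l.map fun p => (p.1 : A) * (-p.2)).sum := by
  induction l with
  | nil => simp
  | cons p t ih => simp only [List.map_cons, List.sum_cons, neg_add, ih, mul_neg]

/-- The right `R`-submodule of `A` spanned by a subset `S ⊆ B`. -/
def FAmod (S : Set A) : Submodule Rᵐᵒᵖ A where
  carrier := {x | ∃ l : List (B × A),
    (∀ p ∈ l, ((p.1 : A)) ∈ S) ∧ (l.map fun p => (p.1 : A) * p.2).sum = x}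
  add_mem' := by
    rintro x y ⟨l, hl, rfl⟩ ⟨l', hl', rfl⟩
    refine ⟨l ++ l', ?_, ?_⟩
    · intro p hp
      rcases List.mem_append.1 hp with h | h
      exacts [hl p h, hl' p h]
    · rw [List.map_append, List.sum_append]
  zero_mem' := ⟨[], by simp, rfl⟩
  smul_mem' := by
    rintro c x ⟨l, hl, rfl⟩
    refine ⟨l.map fun p => (p.1, c • p.2), ?_, ?_⟩
    · intro p hp
      obtain ⟨q, hq, rfl⟩ := List.mem_map.1 hp
      exact hl q hq
    · rw [List.map_map]
      exact (list_smul_sum i χ B hsmul hB c l).symm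

lemma mem_FAmod_of_mem {S : Set A} {s : A} (hs : s ∈ S) (hsB : s ∈ B) :
    s ∈ FAmod i χ B hsmul hB S :=
  ⟨[(⟨s, hsB⟩, 1)], by simpa using hs, by simp⟩

lemma FAmod_mono {S S' : Set A} (h : S ⊆ S') :
    FAmod i χ B hsmul hB S ≤ FAmod i χ B hsmul hB S' := by
  rintro x ⟨l, hl, rfl⟩
  exact ⟨l, fun p hp => h (hl p hp), rfl⟩

lemma leftMulIdeal_le_FAmod {S : Set A} {f : B} (hf : (f : A) ∈ S) :
    leftMulIdeal i χ B hsmul hB f ≤ FAmod i χ B hsmul hB S := by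
  rintro x ⟨a, rfl⟩
  exact ⟨[(f, a)], by simpa using hf, by simp⟩

lemma SubmodL_le_FAmod {S : Set A} :
    ∀ l : List B, (∀ f ∈ l, (f : A) ∈ S) →
      SubmodL i χ B hsmul hB l ≤ FAmod i χ B hsmul hB S := by
  intro l
  induction l with
  | nil => intro _; exact bot_le
  | cons f t ih =>
    intro hl
    refine sup_le ?_ (ih fun g hg => hl g (List.mem_cons_of_mem f hg))
    exact leftMulIdeal_le_FAmod i χ B hsmul hB (hl f List.mem_cons_self)

include hχA hχone hsmul in
lemma isNoeth_RA (hAnoeth : IsNoetherianRing Aᵐᵒᵖ) : IsNoetherian Rᵐᵒᵖ A := by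
  have hwf : WellFoundedGT (Submodule Aᵐᵒᵖ Aᵐᵒᵖ) := isNoetherian_iff'.1 hAnoeth
  let toOpA : Submodule Rᵐᵒᵖ A → Submodule Aᵐᵒᵖ Aᵐᵒᵖ := fun K =>
    { carrier := {x | x.unop ∈ K}
      add_mem' := by
        intro a b ha hb
        show (a + b).unop ∈ K
        rw [unop_add]; exact K.add_mem ha hb
      zero_mem' := by show (0 : Aᵐᵒᵖ).unop ∈ K; rw [unop_zero]; exact K.zero_mem
      smul_mem' := by
        intro c x hx
        show (c • x).unop ∈ K
        have h1 : (c • x).unop = x.unop * c.unop := rfl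
        rw [h1]
        exact K_mul i χ hχA hχone hsmul hx c.unop }
  have hle : ∀ K K', toOpA K ≤ toOpA K' ↔ K ≤ K' := by
    intro K K'
    constructor
    · intro h a ha
      have h2 : (op a) ∈ toOpA K := by show (op a).unop ∈ K; rwa [unop_op]
      have h3 := h h2
      show a ∈ K'
      have h4 : (op a).unop ∈ K' := h3
      rwa [unop_op] at h4
    · intro h x hx
      exact h hx
  have emb : Submodule Rᵐᵒᵖ A ↪o Submodule Aᵐᵒᵖ Aᵐᵒᵖ :=
    OrderEmbedding.ofMapLEIff toOpA (fun K K' => hle K K')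
  exact isNoetherian_mk (emb.strictMono.wellFoundedGT)

include hχA hχone hsmul in
lemma max_choice_RA (hAnoeth : IsNoetherianRing Aᵐᵒᵖ) :
    ∀ 𝒜 : Set (Submodule Rᵐᵒᵖ A), 𝒜.Nonempty → ∃ M ∈ 𝒜, ∀ N ∈ 𝒜, ¬ M < N := by
  have := isNoeth_RA i χ hχA hχone hsmul hAnoeth
  exact fun 𝒜 h𝒜 => set_has_maximal_iff_noetherian.2 this 𝒜 h𝒜

include hχA hχone hsmul hB in
lemma exists_span_list (hAnoeth : IsNoetherianRing Aᵐᵒᵖ) (S : Set A) :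
    ∃ l : List B, (∀ f ∈ l, (f : A) ∈ S) ∧
      FAmod i χ B hsmul hB S ≤ SubmodL i χ B hsmul hB l := by
  set 𝒜 : Set (Submodule Rᵐᵒᵖ A) :=
    {N | ∃ l : List B, (∀ f ∈ l, (f : A) ∈ S) ∧ SubmodL i χ B hsmul hB l = N} with h𝒜
  obtain ⟨M, ⟨l, hlS, hlM⟩, hmax⟩ := max_choice_RA i χ hχA hχone hsmul hAnoeth 𝒜
    ⟨⊥, [], by simp, rfl⟩
  refine ⟨l, hlS, ?_⟩
  rw [hlM]
  have hsingle : ∀ s (hs : s ∈ S) (hsB : s ∈ B),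
      leftMulIdeal i χ B hsmul hB ⟨s, hsB⟩ ≤ M := by
    intro s hs hsB
    by_contra hnle
    have hlt : M < leftMulIdeal i χ B hsmul hB ⟨s, hsB⟩ ⊔ M := by
      refine lt_of_le_of_ne le_sup_right ?_
      intro heq
      exact hnle (heq ▸ le_sup_left)
    exact hmax _ ⟨⟨s, hsB⟩ :: l, by
      intro f hf
      rcases List.mem_cons.1 hf with h | h
      · rw [h]; exact hs
      · exact hlS f h, by
      show leftMulIdeal i χ B hsmul hB ⟨s, hsB⟩ ⊔ SubmodL i χ B hsmul hB l = _
      rw [hlM]⟩ hlt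
  rintro x ⟨l', hl', rfl⟩
  induction l' with
  | nil => simpa using M.zero_mem
  | cons p t ih =>
    simp only [List.map_cons, List.sum_cons]
    refine M.add_mem ?_ (ih (fun q hq => hl' q (List.mem_cons_of_mem p hq)))
    exact hsingle (p.1 : A) (hl' p List.mem_cons_self) p.1.2 ⟨p.2, rfl⟩

include hχA hχmul hχone hsmul hB hqp in
lemma trace_lemma (hAnoeth : IsNoetherianRing Aᵐᵒᵖ)
    (S : Set A) (hS0 : (0 : A) ∈ S) (hSB : ∀ s ∈ S, s ∈ B)
    (hSadd : ∀ x ∈ S, ∀ y ∈ S, x + y ∈ S)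
    (hSmul : ∀ x ∈ S, ∀ c : B, x * (c : A) ∈ S)
    (K : Submodule Rᵐᵒᵖ A) (b : B)
    (h : (b : A) ∈ FAmod i χ B hsmul hB S ⊔ K) :
    ∃ s ∈ S, (b : A) - s ∈ K := by
  obtain ⟨l, hlS, hle⟩ := exists_span_list i χ B hχA hχone hsmul hB hAnoeth S
  have h' : (b : A) ∈ SubmodL i χ B hsmul hB l ⊔ K := (sup_le_sup_right hle K) h
  exact TL_list i χ B hχA hχmul hχone hsmul hB hqp S hS0 hSB hSadd hSmul l hlS K b h'

include hχA hχmul hχone hsmul hB hqp in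
lemma B_noetherian (hAnoeth : IsNoetherianRing Aᵐᵒᵖ) : IsNoetherianRing (↥B)ᵐᵒᵖ := by
  have hwf : WellFoundedGT (Submodule Rᵐᵒᵖ A) :=
    isNoetherian_iff'.1 (isNoeth_RA i χ hχA hχone hsmul hAnoeth)
  let Sof : Submodule (↥B)ᵐᵒᵖ (↥B)ᵐᵒᵖ → Set A := fun J =>
    {x | ∃ j ∈ J, ((MulOpposite.unop j : B) : A) = x}
  have hSof0 : ∀ J, (0 : A) ∈ Sof J := fun J => ⟨0, J.zero_mem, by simp⟩
  have hSofB : ∀ J, ∀ s ∈ Sof J, s ∈ B := by rintro J s ⟨j, _, rfl⟩; exact (unop j).2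
  have hSofadd : ∀ J, ∀ x ∈ Sof J, ∀ y ∈ Sof J, x + y ∈ Sof J := by
    rintro J x ⟨j, hj, rfl⟩ y ⟨j', hj', rfl⟩
    exact ⟨j + j', J.add_mem hj hj', by simp⟩
  have hSofmul : ∀ J, ∀ x ∈ Sof J, ∀ c : B, x * (c : A) ∈ Sof J := by
    rintro J x ⟨j, hj, rfl⟩ c
    refine ⟨(op c) • j, J.smul_mem _ hj, ?_⟩
    have h1 : (op c) • j = op c * j := rfl
    have h2 : (op c * j).unop = j.unop * c := rfl
    rw [h1, h2]
    push_cast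
    rfl
  let F : Submodule (↥B)ᵐᵒᵖ (↥B)ᵐᵒᵖ → Submodule Rᵐᵒᵖ A := fun J =>
    FAmod i χ B hsmul hB (Sof J)
  have hmono : Monotone F := by
    intro J J' hJ
    refine FAmod_mono i χ B hsmul hB ?_
    rintro x ⟨j, hj, rfl⟩
    exact ⟨j, hJ hj, rfl⟩
  have hstrict : StrictMono F := by
    intro J J' hJJ
    refine lt_of_le_of_ne (hmono (le_of_lt hJJ)) ?_
    intro heq
    obtain ⟨j', hj'J', hj'J⟩ := SetLike.exists_of_lt hJJ
    have h1 : ((unop j' : B) : A) ∈ F J' :=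
      mem_FAmod_of_mem i χ B hsmul hB ⟨j', hj'J', rfl⟩ (unop j').2
    rw [← heq] at h1
    have h2 : ((unop j' : B) : A) ∈ F J ⊔ (⊥ : Submodule Rᵐᵒᵖ A) := by rwa [sup_bot_eq]
    obtain ⟨s, hsS, hs⟩ := trace_lemma i χ B hχA hχmul hχone hsmul hB hqp hAnoeth
      (Sof J) (hSof0 J) (hSofB J) (hSofadd J) (hSofmul J) ⊥ (unop j') h2
    rw [Submodule.mem_bot, sub_eq_zero] at hs
    obtain ⟨j₀, hj₀, rfl⟩ := hsS
    have : unop j' = unop j₀ := Subtype.coe_injective hs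
    have : j' = j₀ := MulOpposite.unop_injective this
    exact hj'J (this ▸ hj₀)
  exact isNoetherian_mk (hstrict.wellFoundedGT)

end Span

section Bounded

variable (hχA : ∀ (r : R) (a : A), χ (r * i a) = χ r * a)
variable (hχmul : ∀ r s : R, χ (i (χ r) * s) = χ (r * s))
variable (hχone : χ (1 : R) = 1)
variable (hsmul : ∀ (r : R) (a : A), op r • a = χ (i a * r))
variable (hB : ∀ b : A, b ∈ B ↔ ∀ r : R, χ (i b * r) = b * χ r)
variable (hqp : ∀ (K : Submodule Rᵐᵒᵖ A) (f : A →ₗ[Rᵐᵒᵖ] A ⧸ K),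
      ∃ g : A →ₗ[Rᵐᵒᵖ] A, ∀ a : A, K.mkQ (g a) = f a)

lemma mul_list_sum (a : A) (l : List A) : a * l.sum = (l.map (a * ·)).sum := by
  induction l with
  | nil => simp
  | cons x t ih => simp only [List.sum_cons, List.map_cons, mul_add, ih]

include hχA hχmul hχone hsmul hB hqp in
set_option maxHeartbeats 4000000 in
theorem bounded_quotient (hAnoeth : IsNoetherianRing Aᵐᵒᵖ) (hR : RightFBN R)
    (P : TwoSidedIdeal ↥B) (hP : P.IsPrimeTSI) :
    RightBounded P.ringCon.Quotient := by
  classical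
  intro E hE
  set mkB : ↥B →+* P.ringCon.Quotient := P.ringCon.mk' with hmkB
  have hmkB0 : ∀ b : ↥B, mkB b = 0 ↔ b ∈ P := fun b => tsi_mk_eq_zero_iff P b
  have hmkBsurj : Function.Surjective mkB := tsi_mk_surjective P
  have hprimeq := tsi_quotient_prime P hP
  have hSBnoeth : IsNoetherianRing (P.ringCon.Quotient)ᵐᵒᵖ :=
    tsi_quotient_noeth P (B_noetherian i χ B hχA hχmul hχone hsmul hB hqp hAnoeth)
  have hmaxSB := noeth_max_choice hSBnoeth
  have hmaxRA := max_choice_RA i χ hχA hχone hsmul hAnoeth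
  have hEss : Ess E := hE
  -- basic sets
  set Fset : Set A := {x | ∃ b : ↥B, (b : A) = x ∧ mkB b ∈ E} with hFset
  set Pset : Set A := {x | ∃ b : ↥B, (b : A) = x ∧ b ∈ P} with hPset
  have hF0 : (0 : A) ∈ Fset := ⟨0, by simp, by rw [map_zero]; exact E.zero_mem⟩
  have hFB : ∀ s ∈ Fset, s ∈ B := by rintro s ⟨b, rfl, _⟩; exact b.2
  have hFadd : ∀ x ∈ Fset, ∀ y ∈ Fset, x + y ∈ Fset := by
    rintro x ⟨b, rfl, hb⟩ y ⟨b', rfl, hb'⟩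
    exact ⟨b + b', by push_cast; ring, by rw [map_add]; exact E.add_mem hb hb'⟩
  have hFmul : ∀ x ∈ Fset, ∀ c : ↥B, x * (c : A) ∈ Fset := by
    rintro x ⟨b, rfl, hb⟩ c
    refine ⟨b * c, by push_cast; ring, ?_⟩
    rw [map_mul]
    have : mkB b * mkB c = (op (mkB c)) • (mkB b) := rfl
    rw [this]
    exact E.smul_mem _ hb
  have hFmem : ∀ b : ↥B, (b : A) ∈ Fset ↔ mkB b ∈ E := by
    intro b
    constructor
    · rintro ⟨b', hb', hmem⟩
      have : b' = b := Subtype.coe_injective hb'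
      rwa [this] at hmem
    · intro h; exact ⟨b, rfl, h⟩
  have hP0 : (0 : A) ∈ Pset := ⟨0, by simp, P.zero_mem⟩
  have hPB : ∀ s ∈ Pset, s ∈ B := by rintro s ⟨b, rfl, _⟩; exact b.2
  have hPadd : ∀ x ∈ Pset, ∀ y ∈ Pset, x + y ∈ Pset := by
    rintro x ⟨b, rfl, hb⟩ y ⟨b', rfl, hb'⟩
    exact ⟨b + b', by push_cast; ring, P.add_mem hb hb'⟩
  have hPmul : ∀ x ∈ Pset, ∀ c : ↥B, x * (c : A) ∈ Pset := by
    rintro x ⟨b, rfl, hb⟩ c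
    exact ⟨b * c, by push_cast; ring, P.mul_mem_right b c hb⟩
  have hPmem : ∀ b : ↥B, (b : A) ∈ Pset ↔ b ∈ P := by
    intro b
    constructor
    · rintro ⟨b', hb', hmem⟩
      have : b' = b := Subtype.coe_injective hb'
      rwa [this] at hmem
    · intro h; exact ⟨b, rfl, h⟩
  have hPF : ∀ x ∈ Pset, x ∈ Fset := by
    rintro x ⟨b, rfl, hb⟩
    refine ⟨b, rfl, ?_⟩
    have : mkB b = 0 := (hmkB0 b).2 hb
    rw [this]; exact E.zero_mem
  -- FAmod S is left-B-stable whenever S is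
  have hFAmodB : ∀ S : Set A, (∀ x ∈ S, ∀ c : ↥B, (c : A) * x ∈ S) →
      ∀ (b : ↥B) (x : A), x ∈ FAmod i χ B hsmul hB S → (b : A) * x ∈ FAmod i χ B hsmul hB S := by
    rintro S hSB b x ⟨l, hl, rfl⟩
    refine ⟨l.map fun p => (⟨(b : A) * (p.1 : A), B.mul_mem b.2 p.1.2⟩, p.2), ?_, ?_⟩
    · intro p hp
      obtain ⟨q, hq, rfl⟩ := List.mem_map.1 hp
      exact hSB _ (hl q hq) b
    · rw [List.map_map, mul_list_sum, List.map_map]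
      congr 1
      apply List.map_congr_left
      intro p _
      simp only [Function.comp_apply]
      show ((b : A) * (p.1 : A)) * p.2 = (b : A) * ((p.1 : A) * p.2)
      rw [mul_assoc]
  have hPsetB : ∀ x ∈ Pset, ∀ c : ↥B, (c : A) * x ∈ Pset := by
    rintro x ⟨b, rfl, hb⟩ c
    exact ⟨c * b, by push_cast; ring, P.mul_mem_left c b hb⟩
  -- ### The B-stable trace-closure K̂ of P·A
  set 𝒜₁ : Set (Submodule Rᵐᵒᵖ A) :=
    {K | FAmod i χ B hsmul hB Pset ≤ K ∧
      (∀ (b : ↥B) (x : A), x ∈ K → (b : A) * x ∈ K) ∧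
      (∀ b : ↥B, (b : A) ∈ K → b ∈ P)} with h𝒜₁
  have hPA𝒜₁ : FAmod i χ B hsmul hB Pset ∈ 𝒜₁ := by
    refine ⟨le_refl _, hFAmodB Pset hPsetB, ?_⟩
    intro b hbmem
    have h2 : (b : A) ∈ FAmod i χ B hsmul hB Pset ⊔ (⊥ : Submodule Rᵐᵒᵖ A) := by
      rwa [sup_bot_eq]
    obtain ⟨s, hsP, hs⟩ := trace_lemma i χ B hχA hχmul hχone hsmul hB hqp hAnoeth
      Pset hP0 hPB hPadd hPmul ⊥ b h2
    rw [Submodule.mem_bot, sub_eq_zero] at hs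
    rw [← hPmem b, hs]
    exact hsP
  obtain ⟨Khat, hKhat𝒜₁, hKhatmax⟩ := hmaxRA 𝒜₁ ⟨_, hPA𝒜₁⟩
  have hKhatB : ∀ (b : ↥B) (x : A), x ∈ Khat → (b : A) * x ∈ Khat := hKhat𝒜₁.2.1
  have hKhatP : ∀ b : ↥B, (b : A) ∈ Khat → b ∈ P := hKhat𝒜₁.2.2
  have husage₁ : ∀ K' : Submodule Rᵐᵒᵖ A, Khat ≤ K' →
      (∀ (b : ↥B) (x : A), x ∈ K' → (b : A) * x ∈ K') → K' ≠ Khat →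
      ∃ b : ↥B, (b : A) ∈ K' ∧ b ∉ P := by
    intro K' hle hst hne
    by_contra hno
    push_neg at hno
    exact hKhatmax K' ⟨le_trans hKhat𝒜₁.1 hle, hst, hno⟩ (lt_of_le_of_ne hle (Ne.symm hne))
  -- ### The two-sided ideal 𝔔 of R
  set Qc : Set R := {r | ∀ x y : R, χ (x * r * y) ∈ Khat} with hQc
  have hQc0 : (0 : R) ∈ Qc := by
    intro x y; rw [mul_zero, zero_mul, map_zero]; exact Khat.zero_mem
  have hQcadd : ∀ {r r'}, r ∈ Qc → r' ∈ Qc → r + r' ∈ Qc := by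
    intro r r' hr hr' x y
    rw [mul_add, add_mul, map_add]
    exact Khat.add_mem (hr x y) (hr' x y)
  have hQcneg : ∀ {r}, r ∈ Qc → -r ∈ Qc := by
    intro r hr x y
    rw [mul_neg, neg_mul, map_neg]
    exact Khat.neg_mem (hr x y)
  have hQcmull : ∀ {x y}, y ∈ Qc → x * y ∈ Qc := by
    intro x y hy a b
    have : a * (x * y) * b = (a * x) * y * b := by rw [mul_assoc a x y]
    rw [this]
    exact hy (a * x) b
  have hQcmulr : ∀ {x y}, x ∈ Qc → x * y ∈ Qc := by
    intro x y hx a b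
    have h : a * (x * y) * b = a * x * (y * b) := by simp only [mul_assoc]
    rw [h]
    exact hx a (y * b)
  set Q : TwoSidedIdeal R := TwoSidedIdeal.mk' Qc hQc0 hQcadd hQcneg hQcmull hQcmulr with hQdef
  have hQmem : ∀ r : R, r ∈ Q ↔ ∀ x y : R, χ (x * r * y) ∈ Khat := by
    intro r
    rw [hQdef, TwoSidedIdeal.mem_mk']
    rfl
  have hQchi : ∀ r ∈ Q, χ r ∈ Khat := by
    intro r hr
    have := (hQmem r).1 hr 1 1
    rwa [one_mul, mul_one] at this
  -- ### 𝔔 is prime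
  have hQprime : Q.IsPrimeTSI := by
    constructor
    · -- Q ≠ ⊤
      intro htop
      have h1 : (1 : R) ∈ Q := tsi_one_of_eq_top Q htop
      have h2 : χ ((1 : R) * 1 * 1) ∈ Khat := (hQmem 1).1 h1 1 1
      rw [mul_one, mul_one, hχone] at h2
      have h3 : ((1 : ↥B) : A) ∈ Khat := by
        have : ((1 : ↥B) : A) = (1 : A) := rfl
        rwa [this]
      have h4 : (1 : ↥B) ∈ P := hKhatP 1 h3
      exact hP.1 (tsi_eq_top_of_one P h4)
    · intro u v huv
      by_cases hv : v ∈ Q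
      · right; exact hv
      left
      rw [hQmem]
      intro x y
      -- the submodule U₀ of elements killed into Khat by all x'*v*y'
      set U₀ : Submodule Rᵐᵒᵖ A :=
        { carrier := {a | ∀ x' y' : R, op (x' * v * y') • a ∈ Khat}
          add_mem' := by
            intro a b ha hb x' y'
            rw [smul_add]
            exact Khat.add_mem (ha x' y') (hb x' y')
          zero_mem' := by intro x' y'; rw [smul_zero]; exact Khat.zero_mem
          smul_mem' := by
            intro c a ha x' y'
            have hc : c = op c.unop := (MulOpposite.op_unop c).symm
            rw [hc, smul_smul_op]
            have h5 : c.unop * (x' * v * y') = (c.unop * x') * v * y' := by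
              simp only [mul_assoc]
            rw [h5]
            exact ha (c.unop * x') y' } with hU₀
      have hU₀mem : ∀ a : A, a ∈ U₀ ↔ ∀ x' y' : R, op (x' * v * y') • a ∈ Khat := fun a => Iff.rfl
      have hU₀K : Khat ≤ U₀ := fun a ha x' y' => Khat.smul_mem _ ha
      have hU₀B : ∀ (b : ↥B) (x'' : A), x'' ∈ U₀ → (b : A) * x'' ∈ U₀ := by
        intro b x'' hx'' x' y'
        rw [B_comm i χ B hsmul hB b.2 (x' * v * y') x'']
        exact hKhatB b _ (hx'' x' y')
      have hin : ∀ x₁ y₁ : R, χ (x₁ * u * y₁) ∈ U₀ := by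
        intro x₁ y₁ x' y'
        rw [chi_shift i χ hχmul hsmul]
        have h5 : (x₁ * u * y₁) * (x' * v * y') = x₁ * (u * (y₁ * x') * v) * y' := by
          simp only [mul_assoc]
        rw [h5]
        exact (hQmem _).1 (huv (y₁ * x')) x₁ y'
      by_cases hU : ∀ a ∈ U₀, a ∈ Khat
      · exact hU _ (hin x y)
      · exfalso
        push_neg at hU
        obtain ⟨a₀, ha₀U, ha₀K⟩ := hU
        have hU₀ne : U₀ ≠ Khat := by
          intro h
          exact ha₀K (h ▸ ha₀U)
        obtain ⟨b₀, hb₀U, hb₀P⟩ := husage₁ U₀ hU₀K hU₀B hU₀ne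
        -- second witness from v ∉ Q
        rw [hQmem] at hv
        push_neg at hv
        obtain ⟨x₀, y₀, hx₀y₀⟩ := hv
        set Xv : Submodule Rᵐᵒᵖ A :=
          { carrier := {a | ∃ l : List (R × R), (l.map fun p => χ (p.1 * v * p.2)).sum = a}
            add_mem' := by
              rintro a b ⟨l, rfl⟩ ⟨l', rfl⟩
              exact ⟨l ++ l', by rw [List.map_append, List.sum_append]⟩
            zero_mem' := ⟨[], by simp⟩
            smul_mem' := by
              rintro c a ⟨l, rfl⟩
              refine ⟨l.map fun p => (p.1, p.2 * c.unop), ?_⟩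
              rw [List.map_map, List.smul_sum, List.map_map]
              congr 1
              apply List.map_congr_left
              intro p _
              simp only [Function.comp_apply]
              have hc : c = op c.unop := (MulOpposite.op_unop c).symm
              rw [hc, chi_shift i χ hχmul hsmul]
              have h5 : p.1 * v * p.2 * c.unop = p.1 * v * (p.2 * c.unop) := by
                simp only [mul_assoc]
              rw [h5, MulOpposite.unop_op] } with hXv
        have hXvB : ∀ (b : ↥B) (x'' : A), x'' ∈ Xv → (b : A) * x'' ∈ Xv := by
          rintro b x'' ⟨l, rfl⟩
          refine ⟨l.map fun p => (i (b : A) * p.1, p.2), ?_⟩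
          rw [List.map_map, mul_list_sum, List.map_map]
          congr 1
          apply List.map_congr_left
          intro p _
          simp only [Function.comp_apply]
          rw [B_mul_chi i χ B hsmul hB b.2]
          congr 1
          simp only [mul_assoc]
        set K'' : Submodule Rᵐᵒᵖ A := Khat ⊔ Xv with hK''
        have hK''B : ∀ (b : ↥B) (x'' : A), x'' ∈ K'' → (b : A) * x'' ∈ K'' := by
          intro b x'' hx''
          obtain ⟨k, hk, w, hw, rfl⟩ := Submodule.mem_sup.1 hx''
          rw [mul_add]
          exact Submodule.add_mem_sup (hKhatB b k hk) (hXvB b w hw)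
        have hK''ne : K'' ≠ Khat := by
          intro h
          apply hx₀y₀
          have h6 : χ (x₀ * v * y₀) ∈ Xv := ⟨[(x₀, y₀)], by simp⟩
          have h7 : χ (x₀ * v * y₀) ∈ K'' :=
            (le_sup_right : Xv ≤ Khat ⊔ Xv) h6
          rwa [h] at h7
        obtain ⟨b₁, hb₁K, hb₁P⟩ := husage₁ K'' le_sup_left hK''B hK''ne
        -- primeness of P gives s with b₀ * s * b₁ ∉ P
        have hs : ∃ s : ↥B, b₀ * s * b₁ ∉ P := by
          by_contra hno
          push_neg at hno
          rcases hP.2 b₀ b₁ hno with h | h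
          exacts [hb₀P h, hb₁P h]
        obtain ⟨s, hsP⟩ := hs
        apply hsP
        -- show b₀ * s * b₁ ∈ P via the trace of Khat
        obtain ⟨k, hk, w, ⟨l, rfl⟩, hdecomp⟩ := Submodule.mem_sup.1 hb₁K
        set b₂ : ↥B := b₀ * s with hb₂
        have hb₂U : (b₂ : A) ∈ U₀ := by
          have h8 : (b₂ : A) = op (i (s : A)) • (b₀ : A) := by
            rw [← mul_eq_smul i χ hχA hχone hsmul]
            push_cast
            rfl
          rw [h8]
          exact U₀.smul_mem _ hb₀U
        apply hKhatP
        have h9 : ((b₀ * s * b₁ : ↥B) : A) = (b₂ : A) * (b₁ : A) := by push_cast; rfl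
        rw [h9, ← hdecomp, mul_add]
        refine Khat.add_mem (hKhatB b₂ k hk) ?_
        rw [mul_list_sum, List.map_map]
        refine list_sum_mem ?_
        intro z hz
        obtain ⟨p, hp, rfl⟩ := List.mem_map.1 hz
        simp only [Function.comp_apply]
        rw [B_mul_chi i χ B hsmul hB b₂.2]
        rw [← hsmul]
        exact hb₂U p.1 p.2
  -- ### the closure K⁺ (no B-stability required)
  set 𝒜₂ : Set (Submodule Rᵐᵒᵖ A) :=
    {K | Khat ≤ K ∧ ∀ b : ↥B, (b : A) ∈ K → b ∈ P} with h𝒜₂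
  obtain ⟨Kp, hKp𝒜₂, hKpmax⟩ := hmaxRA 𝒜₂ ⟨Khat, le_refl _, hKhatP⟩
  have hKhatKp : Khat ≤ Kp := hKp𝒜₂.1
  have hKpP : ∀ b : ↥B, (b : A) ∈ Kp → b ∈ P := hKp𝒜₂.2
  have husage₂ : ∀ K' : Submodule Rᵐᵒᵖ A, Kp ≤ K' → K' ≠ Kp →
      ∃ b : ↥B, (b : A) ∈ K' ∧ b ∉ P := by
    intro K' hle hne
    by_contra hno
    push_neg at hno
    exact hKpmax K' ⟨le_trans hKhatKp hle, hno⟩ (lt_of_le_of_ne hle (Ne.symm hne))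
  -- ### the closure K_F
  have hM₀ : ∀ b : ↥B, (b : A) ∈ FAmod i χ B hsmul hB Fset ⊔ Kp → mkB b ∈ E := by
    intro b hb
    obtain ⟨s, hsF, hs⟩ := trace_lemma i χ B hχA hχmul hχone hsmul hB hqp hAnoeth
      Fset hF0 hFB hFadd hFmul Kp b hb
    obtain ⟨bf, rfl, hbfE⟩ := hsF
    have h1 : ((b - bf : ↥B) : A) ∈ Kp := by push_cast; exact hs
    have h2 : b - bf ∈ P := hKpP _ h1
    have h3 : mkB (b - bf) = 0 := (hmkB0 _).2 h2
    have h4 : mkB b - mkB bf = 0 := by rw [← map_sub]; exact h3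
    have h5 : mkB b = mkB bf := by rwa [sub_eq_zero] at h4
    rw [h5]; exact hbfE
  set 𝒜₃ : Set (Submodule Rᵐᵒᵖ A) :=
    {M | FAmod i χ B hsmul hB Fset ⊔ Kp ≤ M ∧ ∀ b : ↥B, (b : A) ∈ M → mkB b ∈ E} with h𝒜₃
  obtain ⟨KF, hKF𝒜₃, hKFmax⟩ := hmaxRA 𝒜₃ ⟨_, le_refl _, hM₀⟩
  have hKpKF : Kp ≤ KF := le_trans le_sup_right hKF𝒜₃.1
  have hKhatKF : Khat ≤ KF := le_trans hKhatKp hKpKF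
  have hKFE : ∀ b : ↥B, (b : A) ∈ KF → mkB b ∈ E := hKF𝒜₃.2
  have hFKF : ∀ s ∈ Fset, s ∈ KF := by
    intro s hsF
    exact hKF𝒜₃.1 (le_sup_left (α := Submodule Rᵐᵒᵖ A)
      (mem_FAmod_of_mem i χ B hsmul hB hsF (hFB s hsF)))
  have husage₃ : ∀ M' : Submodule Rᵐᵒᵖ A, KF ≤ M' → M' ≠ KF →
      ∃ b : ↥B, (b : A) ∈ M' ∧ mkB b ∉ E := by
    intro M' hle hne
    by_contra hno
    push_neg at hno
    exact hKFmax M' ⟨le_trans hKF𝒜₃.1 hle, hno⟩ (lt_of_le_of_ne hle (Ne.symm hne))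
  -- ### the core lemma
  have hcore : ∀ Jset : Set R, (0 : R) ∈ Jset →
      (∀ j ∈ Jset, ∀ j' ∈ Jset, j + j' ∈ Jset) →
      (∀ j ∈ Jset, ∀ s : R, j * s ∈ Jset) →
      (∀ τ ∈ Jset, χ τ ∈ KF → τ ∈ Q) →
      ∀ j ∈ Jset, j ∈ Q := by
    intro Jset hJ0 hJadd hJmul hall
    by_cases hcase : ∀ j ∈ Jset, χ j ∈ KF
    · intro j hj; exact hall j hj (hcase j hj)
    · exfalso
      push_neg at hcase
      obtain ⟨j₀', hj₀'J, hj₀'⟩ := hcase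
      set Xχ : Submodule Rᵐᵒᵖ A :=
        { carrier := {a | ∃ j ∈ Jset, χ j = a}
          add_mem' := by
            rintro a b ⟨j, hj, rfl⟩ ⟨j', hj', rfl⟩
            exact ⟨j + j', hJadd j hj j' hj', by rw [map_add]⟩
          zero_mem' := ⟨0, hJ0, by rw [map_zero]⟩
          smul_mem' := by
            rintro c a ⟨j, hj, rfl⟩
            refine ⟨j * c.unop, hJmul j hj c.unop, ?_⟩
            have hc : c = op c.unop := (MulOpposite.op_unop c).symm
            rw [hc, chi_shift i χ hχmul hsmul, MulOpposite.unop_op] } with hXχ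
      have hM'ne : KF ⊔ Xχ ≠ KF := by
        intro h
        apply hj₀'
        have h1 : χ j₀' ∈ KF ⊔ Xχ := (le_sup_right : Xχ ≤ _) ⟨j₀', hj₀'J, rfl⟩
        rwa [h] at h1
      obtain ⟨b, hbM', hbE⟩ := husage₃ (KF ⊔ Xχ) le_sup_left hM'ne
      obtain ⟨mhat, hmhat, xχ, ⟨j, hjJ, rfl⟩, hbdec⟩ := Submodule.mem_sup.1 hbM'
      have hχjKp : χ j ∉ Kp := by
        intro h
        apply hbE
        apply hKFE
        rw [← hbdec]
        exact KF.add_mem hmhat (hKpKF h)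
      set Spanc : Submodule Rᵐᵒᵖ A :=
        { carrier := {a | ∃ ρ : R, χ (j * ρ) = a}
          add_mem' := by
            rintro a b ⟨ρ, rfl⟩ ⟨ρ', rfl⟩
            exact ⟨ρ + ρ', by rw [mul_add, map_add]⟩
          zero_mem' := ⟨0, by rw [mul_zero, map_zero]⟩
          smul_mem' := by
            rintro c a ⟨ρ, rfl⟩
            refine ⟨ρ * c.unop, ?_⟩
            have hc : c = op c.unop := (MulOpposite.op_unop c).symm
            rw [hc, chi_shift i χ hχmul hsmul, MulOpposite.unop_op, mul_assoc] } with hSpanc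
      have hMstarne : Kp ⊔ Spanc ≠ Kp := by
        intro h
        apply hχjKp
        have h1 : χ j ∈ Spanc := ⟨1, by rw [mul_one]⟩
        have h2 : χ j ∈ Kp ⊔ Spanc := (le_sup_right : Spanc ≤ _) h1
        rwa [h] at h2
      obtain ⟨b₃, hb₃M, hb₃P⟩ := husage₂ (Kp ⊔ Spanc) le_sup_left hMstarne
      obtain ⟨kp, hkp, sc, ⟨rhot, rfl⟩, hb₃dec⟩ := Submodule.mem_sup.1 hb₃M
      set j₁ : R := j * rhot with hj₁
      have hj₁J : j₁ ∈ Jset := hJmul j hjJ rhot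
      -- the key step
      have hstep : ∀ β : ↥B, mkB (b₃ * β) ∈ E → b₃ * β ∈ P := by
        intro β hEβ
        have h1 : ((b₃ * β : ↥B) : A) ∈ Fset := ⟨b₃ * β, rfl, hEβ⟩
        have h2 : ((b₃ * β : ↥B) : A) ∈ KF := hFKF _ h1
        have h3 : kp * (β : A) ∈ Kp := K_mul i χ hχA hχone hsmul hkp (β : A)
        have h4 : χ (j₁ * i (β : A)) = ((b₃ * β : ↥B) : A) - kp * (β : A) := by
          rw [hχA]
          have h5 : ((b₃ * β : ↥B) : A) = (kp + χ j₁) * (β : A) := by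
            rw [hb₃dec]; push_cast; rfl
          rw [h5, add_mul]
          exact (add_sub_cancel_left _ _).symm
        have h6 : χ (j₁ * i (β : A)) ∈ KF := by
          rw [h4]
          exact sub_mem h2 (hKpKF h3)
        have h7 : j₁ * i (β : A) ∈ Q := hall _ (hJmul j₁ hj₁J (i (β : A))) h6
        have h8 : χ (j₁ * i (β : A)) ∈ Khat := hQchi _ h7
        have h9 : ((b₃ * β : ↥B) : A) ∈ Kp := by
          have := Kp.add_mem (hKhatKp h8) h3
          rwa [h4, sub_add_cancel] at this
        exact hKpP _ h9
      -- singularity in B/P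
      have hx0 : mkB b₃ ≠ 0 := fun h => hb₃P ((hmkB0 _).1 h)
      have hann : Ess (rAnn (mkB b₃)) := by
        have hsub : colonI E (mkB b₃) ≤ rAnn (mkB b₃) := by
          intro t ht
          rw [mem_colonI] at ht
          obtain ⟨β, rfl⟩ := hmkBsurj t
          rw [mem_rAnn, ← map_mul]
          rw [← map_mul] at ht
          exact (hmkB0 _).2 (hstep β ht)
        exact ess_mono hsub (ess_colonI hEss (mkB b₃))
      exact hx0 (singular_eq_zero hmaxSB hprimeq (mkB b₃) hann)
  -- ### apply boundedness of R/Q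
  set mkR : R →+* Q.ringCon.Quotient := Q.ringCon.mk' with hmkR
  have hmkR0 : ∀ r : R, mkR r = 0 ↔ r ∈ Q := fun r => tsi_mk_eq_zero_iff Q r
  have hmkRsurj : Function.Surjective mkR := tsi_mk_surjective Q
  set ER : Submodule (Q.ringCon.Quotient)ᵐᵒᵖ Q.ringCon.Quotient :=
    { carrier := {x | ∃ r : R, χ r ∈ KF ∧ mkR r = x}
      add_mem' := by
        rintro x y ⟨r, hr, rfl⟩ ⟨r', hr', rfl⟩
        exact ⟨r + r', by rw [map_add]; exact KF.add_mem hr hr', by rw [map_add]⟩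
      zero_mem' := ⟨0, by rw [map_zero]; exact KF.zero_mem, by rw [map_zero]⟩
      smul_mem' := by
        rintro c x ⟨r, hr, rfl⟩
        obtain ⟨s, hs⟩ := hmkRsurj c.unop
        refine ⟨r * s, ?_, ?_⟩
        · have h1 : χ (r * s) = op s • χ r := (chi_shift i χ hχmul hsmul r s).symm
          rw [h1]
          exact KF.smul_mem _ hr
        · rw [map_mul, hs]
          rfl } with hER
  have hERess : ∀ J : Submodule (Q.ringCon.Quotient)ᵐᵒᵖ Q.ringCon.Quotient,
      J ≠ ⊥ → ER ⊓ J ≠ ⊥ := by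
    intro J hJ
    obtain ⟨x, hxJ, hx0⟩ := (Submodule.ne_bot_iff J).1 hJ
    obtain ⟨ρ, rfl⟩ := hmkRsurj x
    have hρQ : ρ ∉ Q := fun h => hx0 ((hmkR0 ρ).2 h)
    set Jset : Set R := {r | mkR r ∈ J} with hJset
    have hJ0' : (0 : R) ∈ Jset := by show mkR 0 ∈ J; rw [map_zero]; exact J.zero_mem
    have hJadd' : ∀ j ∈ Jset, ∀ j' ∈ Jset, j + j' ∈ Jset := by
      intro j hj j' hj'
      show mkR (j + j') ∈ J
      rw [map_add]; exact J.add_mem hj hj'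
    have hJmul' : ∀ j ∈ Jset, ∀ s : R, j * s ∈ Jset := by
      intro j hj s
      show mkR (j * s) ∈ J
      rw [map_mul]
      have h1 : mkR j * mkR s = op (mkR s) • (mkR j) := rfl
      rw [h1]
      exact J.smul_mem _ hj
    have hnot : ¬ (∀ τ ∈ Jset, χ τ ∈ KF → τ ∈ Q) := by
      intro hallJ
      exact hρQ (hcore Jset hJ0' hJadd' hJmul' hallJ ρ hxJ)
    push_neg at hnot
    obtain ⟨τ, hτJ, hτχ, hτQ⟩ := hnot
    rw [Submodule.ne_bot_iff]
    refine ⟨mkR τ, Submodule.mem_inf.2 ⟨⟨τ, hτχ, rfl⟩, hτJ⟩, ?_⟩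
    intro h
    exact hτQ ((hmkR0 τ).1 h)
  obtain ⟨TR, hTRne, hTRle⟩ := hR.2 Q hQprime ER hERess
  -- ### construct the two-sided ideal of B/P
  set XχT : Submodule Rᵐᵒᵖ A :=
    { carrier := {a | ∃ τ : R, mkR τ ∈ TR ∧ χ τ = a}
      add_mem' := by
        rintro a b ⟨τ, hτ, rfl⟩ ⟨τ', hτ', rfl⟩
        refine ⟨τ + τ', ?_, by rw [map_add]⟩
        rw [map_add]; exact TR.add_mem hτ hτ'
      zero_mem' := ⟨0, by rw [map_zero]; exact TR.zero_mem, by rw [map_zero]⟩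
      smul_mem' := by
        rintro c a ⟨τ, hτ, rfl⟩
        refine ⟨τ * c.unop, ?_, ?_⟩
        · rw [map_mul]; exact TR.mul_mem_right _ _ hτ
        · have hc : c = op c.unop := (MulOpposite.op_unop c).symm
          rw [hc, chi_shift i χ hχmul hsmul, MulOpposite.unop_op] } with hXχT
  set Xsup : Submodule Rᵐᵒᵖ A := XχT ⊔ Khat with hXsup
  have hXsupB : ∀ (b : ↥B) (x : A), x ∈ Xsup → (b : A) * x ∈ Xsup := by
    intro b x hx
    obtain ⟨w, ⟨τ, hτ, rfl⟩, k, hk, rfl⟩ := Submodule.mem_sup.1 hx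
    rw [mul_add]
    refine Submodule.add_mem_sup ?_ (hKhatB b k hk)
    refine ⟨i (b : A) * τ, ?_, ?_⟩
    · rw [map_mul]; exact TR.mul_mem_left _ _ hτ
    · rw [B_mul_chi i χ B hsmul hB b.2]
  -- the witness element not in P
  obtain ⟨xT, hxT, hxT0⟩ := (by
    by_contra h
    push_neg at h
    apply hTRne
    exact TwoSidedIdeal.ext fun z => ⟨fun hz => by
      rw [TwoSidedIdeal.mem_bot]
      by_contra hz0
      exact hz0 (h z hz), fun hz => by
        rw [TwoSidedIdeal.mem_bot] at hz
        rw [hz]; exact TR.zero_mem⟩ : ∃ z ∈ TR, z ≠ 0)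
  obtain ⟨τstar, rfl⟩ := hmkRsurj xT
  have hτstarQ : τstar ∉ Q := fun h => hxT0 ((hmkR0 _).2 h)
  have hτstarw : ∃ x y : R, χ (x * τstar * y) ∉ Khat := by
    by_contra h
    push_neg at h
    exact hτstarQ ((hQmem τstar).2 h)
  obtain ⟨xw, yw, hw⟩ := hτstarw
  have hXsupne : Xsup ≠ Khat := by
    intro h
    apply hw
    have h1 : χ (xw * τstar * yw) ∈ XχT := by
      refine ⟨xw * τstar * yw, ?_, rfl⟩
      rw [map_mul, map_mul]
      exact TR.mul_mem_right _ _ (TR.mul_mem_left _ _ hxT)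
    have h2 : χ (xw * τstar * yw) ∈ Xsup := (le_sup_left : XχT ≤ Xsup) h1
    rwa [h] at h2
  obtain ⟨bT, hbT, hbTP⟩ := husage₁ Xsup le_sup_right hXsupB hXsupne
  -- membership of Xsup implies membership of KF for B-elements, giving E-membership
  have hXsupKF : ∀ x : A, x ∈ Xsup → x ∈ KF := by
    intro x hx
    obtain ⟨w, ⟨τ, hτ, rfl⟩, k, hk, rfl⟩ := Submodule.mem_sup.1 hx
    refine KF.add_mem ?_ (hKhatKF hk)
    obtain ⟨r', hr'KF, hr'mk⟩ := hTRle _ hτ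
    have hττ : τ - r' ∈ Q := (tsi_mk_eq_iff Q τ r').1 (by rw [← hr'mk])
    have h1 : χ τ = χ r' + χ (τ - r') := by rw [← map_add, add_sub_cancel]
    rw [h1]
    exact KF.add_mem hr'KF (hKhatKF (hQchi _ hττ))
  -- assemble the two-sided ideal of the quotient
  set Tcar : Set P.ringCon.Quotient := {x | ∃ b : ↥B, (b : A) ∈ Xsup ∧ mkB b = x} with hTcar
  have hz0 : (0 : P.ringCon.Quotient) ∈ Tcar :=
    ⟨0, by simpa using Xsup.zero_mem, map_zero mkB⟩
  have hzadd : ∀ {x y : P.ringCon.Quotient}, x ∈ Tcar → y ∈ Tcar → x + y ∈ Tcar := by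
    rintro x y ⟨b, hb, rfl⟩ ⟨b', hb', rfl⟩
    exact ⟨b + b', by push_cast; exact Xsup.add_mem hb hb', map_add mkB b b'⟩
  have hzneg : ∀ {x : P.ringCon.Quotient}, x ∈ Tcar → -x ∈ Tcar := by
    rintro x ⟨b, hb, rfl⟩
    exact ⟨-b, by push_cast; exact Xsup.neg_mem hb, map_neg mkB b⟩
  have hzml : ∀ {x y : P.ringCon.Quotient}, y ∈ Tcar → x * y ∈ Tcar := by
    rintro x y ⟨b, hb, rfl⟩
    obtain ⟨β, rfl⟩ := hmkBsurj x
    exact ⟨β * b, hXsupB β _ hb, map_mul mkB β b⟩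
  have hzmr : ∀ {x y : P.ringCon.Quotient}, x ∈ Tcar → x * y ∈ Tcar := by
    rintro x y ⟨b, hb, rfl⟩
    obtain ⟨β, rfl⟩ := hmkBsurj y
    refine ⟨b * β, ?_, map_mul mkB b β⟩
    have h1 : ((b * β : ↥B) : A) = op (i (β : A)) • (b : A) := by
      rw [← mul_eq_smul i χ hχA hχone hsmul]
      push_cast
      rfl
    rw [h1]
    exact Xsup.smul_mem _ hb
  refine ⟨TwoSidedIdeal.mk' Tcar hz0 hzadd hzneg hzml hzmr, ?_, ?_⟩
  · -- nonzero
    intro h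
    apply hbTP
    have h1 : mkB bT ∈ TwoSidedIdeal.mk' Tcar hz0 hzadd hzneg hzml hzmr := by
      rw [TwoSidedIdeal.mem_mk']
      exact ⟨bT, hbT, rfl⟩
    rw [h, TwoSidedIdeal.mem_bot] at h1
    exact (hmkB0 bT).1 h1
  · -- contained in E
    intro x hx
    rw [TwoSidedIdeal.mem_mk'] at hx
    obtain ⟨b, hb, rfl⟩ := hx
    exact hKFE b (hXsupKF _ hb)

end Bounded

end Main

end FBNAux

/-- Let `(R, i, χ)` be an `A`-ring with a right grouplike character,
and assume that `A` is quasi-projective as a right `R`-module via `a ↼ r = χ (i a * r)`.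
If `R` is right FBN and `A` is right noetherian, then the subring of invariants
`B = A^R = {b : A | χ (i b * r) = b * χ r for all r}` is right FBN. -/
theorem invariants_rightFBN_descent
    {A R : Type u} [Ring A] [Ring R] (i : A →+* R) (χ : R →+ A)
    (hχA : ∀ (r : R) (a : A), χ (r * i a) = χ r * a)
    (hχmul : ∀ r s : R, χ (i (χ r) * s) = χ (r * s))
    (hχone : χ (1 : R) = 1)
    -- A as a right R-module
    [Module Rᵐᵒᵖ A]
    (hsmul : ∀ (r : R) (a : A), op r • a = χ (i a * r))
    -- A is quasi-projective as a right R-module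
    (hqp : ∀ (K : Submodule Rᵐᵒᵖ A) (f : A →ₗ[Rᵐᵒᵖ] A ⧸ K),
      ∃ g : A →ₗ[Rᵐᵒᵖ] A, ∀ a : A, K.mkQ (g a) = f a)
    -- the subring of invariants
    (B : Subring A)
    (hB : ∀ b : A, b ∈ B ↔ ∀ r : R, χ (i b * r) = b * χ r)
    (hR : RightFBN R)
    (hAnoeth : IsNoetherianRing Aᵐᵒᵖ) :
    RightFBN B := by
  constructor
  · exact FBNAux.B_noetherian i χ B hχA hχmul hχone hsmul hB hqp hAnoeth
  · intro P hP
    exact FBNAux.bounded_quotient i χ B hχA hχmul hχone hsmul hB hqp hAnoeth hR P hP
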